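/- Let A ∈ ℂ^{n×n} be sectorial with numerical range in the sector { re^{iθ} : r > 0, |θ| ≤ φ̄ } where φ̄ < π/2, and let α satisfy 0 ≤ α < π − φ̄. Then for every B ∈ ℂ^{n×n} with W(B) ⊆ { re^{iθ} : r > 0, |θ| ≤ α }, the matrix I + AB is invertible. -/

import Mathlib

open Matrix

/-- The numerical range of a complex square matrix. -/
def numRange {n : ℕ} (A : Matrix (Fin n) (Fin n) ℂ) : Set ℂ :=
  {z | ∃ x : Fin n → ℂ, star x ⬝ᵥ x = 1 ∧ z = star x ⬝ᵥ (A *ᵥ x)}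

/-- The closed sector `{ r e^{iθ} : r > 0, α ≤ θ ≤ β }`. -/
def sector (α β : ℝ) : Set ℂ :=
  {z | ∃ r θ : ℝ, 0 < r ∧ α ≤ θ ∧ θ ≤ β ∧ z = (r : ℂ) * Complex.exp ((θ : ℂ) * Complex.I)}

/-- For a nonzero vector `x`, a positive multiple of the quadratic form value
`star x ⬝ᵥ (A *ᵥ x)` lies in the numerical range. -/
lemma scaled_mem_numRange {n : ℕ} (A : Matrix (Fin n) (Fin n) ℂ)
    {x : Fin n → ℂ} (hx : x ≠ 0) :
    ∃ c : ℝ, 0 < c ∧ ((c : ℂ) * (star x ⬝ᵥ (A *ᵥ x))) ∈ numRange A := by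
  set R : ℝ := ∑ i, Complex.normSq (x i) with hR
  have hxx : star x ⬝ᵥ x = (R : ℂ) := by
    simp only [dotProduct, Pi.star_apply, hR]
    push_cast
    refine Finset.sum_congr rfl fun i _ => ?_
    rw [Complex.normSq_eq_conj_mul_self]
    rfl
  have hRpos : 0 < R := by
    rcases (Finset.sum_nonneg fun i (_ : i ∈ Finset.univ) =>
        Complex.normSq_nonneg (x i)).lt_or_eq with h | h
    · exact h
    · exfalso
      apply hx
      funext i
      have := (Finset.sum_eq_zero_iff_of_nonneg
        (fun i (_ : i ∈ Finset.univ) => Complex.normSq_nonneg (x i))).mp h.symm i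
        (Finset.mem_univ i)
      simpa using Complex.normSq_eq_zero.mp this
  refine ⟨R⁻¹, inv_pos.mpr hRpos, ?_⟩
  set a : ℝ := (Real.sqrt R)⁻¹ with ha
  have hstar : star ((a : ℂ) • x) = (a : ℂ) • star x := by
    rw [star_smul]
    congr 1
    simp [Complex.star_def, Complex.conj_ofReal]
  have ha2 : ((a : ℂ)) * (a : ℂ) = ((R⁻¹ : ℝ) : ℂ) := by
    have : (a : ℝ) * a = R⁻¹ := by
      rw [ha, ← Real.sqrt_inv, Real.mul_self_sqrt (inv_nonneg.mpr hRpos.le)]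
    push_cast [← this]
    ring
  refine ⟨(a : ℂ) • x, ?_, ?_⟩
  · rw [hstar, smul_dotProduct, dotProduct_smul, hxx, smul_smul, smul_eq_mul,
      ha2, ← Complex.ofReal_mul, inv_mul_cancel₀ hRpos.ne']
    norm_num
  · rw [hstar, Matrix.mulVec_smul, smul_dotProduct, dotProduct_smul,
      smul_smul, smul_eq_mul, ha2]

/-- Membership in a positively-scaled sector gives a polar representation. -/
lemma sector_repr {a b : ℝ} {z : ℂ} {c : ℝ} (hc : 0 < c)
    (h : (c : ℂ) * z ∈ sector a b) :
    ∃ r θ : ℝ, 0 < r ∧ a ≤ θ ∧ θ ≤ b ∧ z = (r : ℂ) * Complex.exp ((θ : ℂ) * Complex.I) := by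
  obtain ⟨r, θ, hr, h1, h2, h3⟩ := h
  refine ⟨r / c, θ, div_pos hr hc, h1, h2, ?_⟩
  have hc' : (c : ℂ) ≠ 0 := by exact_mod_cast hc.ne'
  field_simp at h3 ⊢
  rw [mul_comm] at h3
  rw [Complex.ofReal_div]
  field_simp
  linear_combination h3

/-- Rank robustness (case `k = 1`): if `W(A)` lies in the sector of half-angle
`φ̄ < π/2` and `0 ≤ α < π - φ̄`, then `I + A B` is invertible for every `B` with
`W(B)` in the sector of half-angle `α`. -/
theorem one_add_mul_isUnit (n : ℕ) (phiBar α : ℝ)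
    (hphi : phiBar < Real.pi / 2) (hα0 : 0 ≤ α) (hα : α < Real.pi - phiBar)
    (A : Matrix (Fin n) (Fin n) ℂ) (hA : numRange A ⊆ sector (-phiBar) phiBar) :
    ∀ B : Matrix (Fin n) (Fin n) ℂ, numRange B ⊆ sector (-α) α →
      IsUnit (1 + A * B) := by
  intro B hB
  rw [Matrix.isUnit_iff_isUnit_det, isUnit_iff_ne_zero]
  intro hdet
  obtain ⟨x, hx0, hxker⟩ := Matrix.exists_mulVec_eq_zero_iff.mpr hdet
  set y : Fin n → ℂ := B *ᵥ x with hy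
  have hxe : A *ᵥ y = -x := by
    have h : x + (A * B) *ᵥ x = 0 := by
      rw [Matrix.add_mulVec, Matrix.one_mulVec] at hxker; exact hxker
    rw [hy, Matrix.mulVec_mulVec]
    exact eq_neg_of_add_eq_zero_right h
  have hy0 : y ≠ 0 := by
    intro h
    apply hx0
    have h2 : A *ᵥ y = -x := hxe
    rw [h, Matrix.mulVec_zero] at h2
    simpa using h2.symm
  obtain ⟨c1, hc1, hs⟩ := scaled_mem_numRange A hy0
  obtain ⟨c2, hc2, ht⟩ := scaled_mem_numRange B hx0
  obtain ⟨r1, θ1, hr1, hθ1a, hθ1b, hrep1⟩ := sector_repr hc1 (hA hs)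
  obtain ⟨r2, θ2, hr2, hθ2a, hθ2b, hrep2⟩ := sector_repr hc2 (hB ht)
  -- conjugate-symmetry of the dot product
  have hdp : ∀ u v : Fin n → ℂ, (starRingEnd ℂ) (star u ⬝ᵥ v) = star v ⬝ᵥ u := by
    intro u v
    simp only [dotProduct, map_sum, _root_.map_mul, Pi.star_apply, Complex.star_def,
      Complex.conj_conj]
    exact Finset.sum_congr rfl fun i _ => mul_comm _ _
  have hyx : star x ⬝ᵥ (B *ᵥ x) = star x ⬝ᵥ y := by rw [hy]
  have hkey : star y ⬝ᵥ (A *ᵥ y) = -(starRingEnd ℂ) (star x ⬝ᵥ y) := by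
    rw [hxe, dotProduct_neg, hdp x y]
  rw [hrep1, hyx, hrep2] at hkey
  have hconj : (starRingEnd ℂ) ((r2 : ℂ) * Complex.exp ((θ2 : ℂ) * Complex.I)) =
      (r2 : ℂ) * Complex.exp ((-(θ2 : ℂ)) * Complex.I) := by
    rw [_root_.map_mul, ← Complex.exp_conj, Complex.conj_ofReal]
    congr 2
    rw [_root_.map_mul, Complex.conj_ofReal, Complex.conj_I]
    ring
  rw [hconj] at hkey
  -- multiply both sides by exp(θ2 I)
  have hE : (r1 : ℂ) * Complex.exp (((θ1 + θ2 : ℝ) : ℂ) * Complex.I) = -(r2 : ℂ) := by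
    have e1 : ((θ1 + θ2 : ℝ) : ℂ) * Complex.I =
        (θ1 : ℂ) * Complex.I + (θ2 : ℂ) * Complex.I := by push_cast; ring
    have e2 : (-(θ2 : ℂ)) * Complex.I + (θ2 : ℂ) * Complex.I = 0 := by ring
    calc (r1 : ℂ) * Complex.exp (((θ1 + θ2 : ℝ) : ℂ) * Complex.I)
        = ((r1 : ℂ) * Complex.exp ((θ1 : ℂ) * Complex.I)) *
            Complex.exp ((θ2 : ℂ) * Complex.I) := by
          rw [e1, Complex.exp_add]; ring
      _ = -((r2 : ℂ) * Complex.exp ((-(θ2 : ℂ)) * Complex.I)) *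
            Complex.exp ((θ2 : ℂ) * Complex.I) := by rw [hkey]
      _ = -(r2 : ℂ) := by
          rw [neg_mul, mul_assoc, ← Complex.exp_add, e2, Complex.exp_zero, mul_one]
  -- take absolute values : r1 = r2
  have habs : r1 = r2 := by
    have h := congrArg (‖·‖) hE
    rw [norm_mul, Complex.norm_exp_ofReal_mul_I, mul_one, norm_neg,
      Complex.norm_of_nonneg hr1.le, Complex.norm_of_nonneg hr2.le] at h
    exact h
  -- hence cos (θ1 + θ2) = -1
  have hcos : Real.cos (θ1 + θ2) = -1 := by
    have hre := congrArg Complex.re hE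
    rw [Complex.mul_re, Complex.ofReal_re, Complex.ofReal_im, zero_mul, sub_zero,
      Complex.exp_ofReal_mul_I_re, Complex.neg_re, Complex.ofReal_re, habs] at hre
    have := mul_left_cancel₀ hr2.ne' (by linarith : r2 * Real.cos (θ1 + θ2) = r2 * (-1))
    exact this
  -- but |θ1 + θ2| < π
  have hlt : |θ1 + θ2| < Real.pi := by
    rw [abs_lt]
    constructor <;> nlinarith
  obtain ⟨k, hk⟩ := Real.cos_eq_neg_one_iff.mp hcos
  have hπ : 0 < Real.pi := Real.pi_pos
  have hab := abs_lt.mp hlt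
  rcases le_or_gt 0 k with hk0 | hk0
  · have hk' : (0 : ℝ) ≤ (k : ℝ) := by exact_mod_cast hk0
    nlinarith
  · have hk' : (k : ℝ) ≤ -1 := by exact_mod_cast (by omega : k ≤ -1)
    nlinarith
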